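/- Let K be an algebraically closed field of characteristic 0, m ≥ 0 and k ≥ 0 integers, a an integer. Let h_0, …, h_k ∈ K[t_0,t_1] be pairwise distinct homogeneous forms of degree m, let s_0, …, s_k ≥ 0 be integers with s_i ≤ min(s_{i+1}, max(i·m+a+1, 0)) for 0 ≤ i ≤ k−1 and s_k ≤ max(k·m+a+1, 0), and let D_0, …, D_k ∈ K[t_0,t_1] be nonzero homogeneous forms with deg D_i = s_i such that for all i ≠ j the forms D_i and h_i − h_j have no common zero in K²∖{0}. Then dim_K { f ∈ V_{k,a} : D_i divides g_{f,h_i} in K[t_0,t_1] for every 0 ≤ i ≤ k } = dim_K V_{k,a} − Σ_{i=0}^{k} s_i. (Geometrically: effective divisors D_i of degree s_i on k+1 distinct sections of F_m → P^1, disjoint from the other sections, impose independent conditions on |O_{F_m}(k,a)|.) -/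

import Mathlib

open MvPolynomial

noncomputable section

/-- The space `V_{k,a}`: tuples `(f_0,…,f_k)` of binary forms, with `f_i`
homogeneous of degree `i*m+a`, and `f_i = 0` whenever `i*m+a < 0`. -/
def Vsub (K : Type) [Field K] (m k : ℕ) (a : ℤ) :
    Submodule K (Fin (k + 1) → MvPolynomial (Fin 2) K) :=
  ⨅ i : Fin (k + 1),
    ((homogeneousSubmodule (Fin 2) K (((i : ℕ) : ℤ) * (m : ℤ) + a).toNat ⊓
        (if (((i : ℕ) : ℤ) * (m : ℤ) + a) < 0 then
          (⊥ : Submodule K (MvPolynomial (Fin 2) K)) else ⊤)).comap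
      (LinearMap.proj i))

/-- Evaluation of `f ∈ V_{k,a}` at a point `(p,q)` of `F_m`:
`Σ f_i(p) · q_0^i · q_1^(k-i)`, as a linear functional. -/
def ptEval (K : Type) [Field K] (k : ℕ) (x : (Fin 2 → K) × (Fin 2 → K)) :
    (Fin (k + 1) → MvPolynomial (Fin 2) K) →ₗ[K] K :=
  ∑ i : Fin (k + 1),
    (x.2 0 ^ (i : ℕ) * x.2 1 ^ (k - (i : ℕ))) •
      ((aeval x.1 : MvPolynomial (Fin 2) K →ₐ[K] K).toLinearMap.comp (LinearMap.proj i))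

/-- The restriction `g_{f,h} := Σ f_i · h^(k-i)` of `F_f` to the section given by `h`. -/
def gRes (K : Type) [Field K] (k : ℕ) (h : MvPolynomial (Fin 2) K)
    (f : Fin (k + 1) → MvPolynomial (Fin 2) K) : MvPolynomial (Fin 2) K :=
  ∑ i : Fin (k + 1), f i * h ^ (k - (i : ℕ))

/-- `gRes` as a linear map in `f`. -/
def gResL (K : Type) [Field K] (k : ℕ) (h : MvPolynomial (Fin 2) K) :
    (Fin (k + 1) → MvPolynomial (Fin 2) K) →ₗ[K] MvPolynomial (Fin 2) K :=
  ∑ i : Fin (k + 1),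
    (LinearMap.mulLeft K (h ^ (k - (i : ℕ)))).comp (LinearMap.proj i)

/-- Evaluation of `g_{f,h}` at a parameter `p`, as a linear functional in `f`. -/
def gEval (K : Type) [Field K] (k : ℕ) (h : MvPolynomial (Fin 2) K) (p : Fin 2 → K) :
    (Fin (k + 1) → MvPolynomial (Fin 2) K) →ₗ[K] K :=
  ∑ i : Fin (k + 1),
    (eval p h ^ (k - (i : ℕ))) •
      ((aeval p : MvPolynomial (Fin 2) K →ₐ[K] K).toLinearMap.comp (LinearMap.proj i))

/-- `F_f := Σ f_i(t_0,t_1) · u_0^i · u_1^(k-i) ∈ K[t_0,t_1,u_0,u_1]`. -/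
def Fpoly (K : Type) [Field K] (k : ℕ) (f : Fin (k + 1) → MvPolynomial (Fin 2) K) :
    MvPolynomial (Fin 4) K :=
  ∑ i : Fin (k + 1),
    rename (Fin.castLE (by norm_num)) (f i) * X 2 ^ (i : ℕ) * X 3 ^ (k - (i : ℕ))

/-- The chart polynomial `P_f(t,u) := Σ f_j(t,1) · u^(k-j)`, in variables `t = X 0`, `u = X 1`. -/
def chartPoly (K : Type) [Field K] (k : ℕ) (f : Fin (k + 1) → MvPolynomial (Fin 2) K) :
    MvPolynomial (Fin 2) K :=
  ∑ j : Fin (k + 1), aeval ![X 0, 1] (f j) * X 1 ^ (k - (j : ℕ))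

/-- `chartPoly` as a linear map in `f`. -/
def chartPolyL (K : Type) [Field K] (k : ℕ) :
    (Fin (k + 1) → MvPolynomial (Fin 2) K) →ₗ[K] MvPolynomial (Fin 2) K :=
  ∑ j : Fin (k + 1),
    (LinearMap.mulLeft K ((X 1 : MvPolynomial (Fin 2) K) ^ (k - (j : ℕ)))).comp
      (((aeval ![X 0, 1] : MvPolynomial (Fin 2) K →ₐ[K] MvPolynomial (Fin 2) K)).toLinearMap.comp
        (LinearMap.proj j))

end


set_option maxHeartbeats 1000000
set_option synthInstance.maxHeartbeats 400000

noncomputable section AuxiliaryLemmas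

variable {K : Type} [Field K]

lemma degree_fin2 (d : Fin 2 →₀ ℕ) : d.degree = d 0 + d 1 := by
  rw [Finsupp.degree_eq_sum]
  exact Fin.sum_univ_two d

/-- index equiv for degree-`n` monomials in two variables -/
def degSetEquiv (n : ℕ) : {d : Fin 2 →₀ ℕ | d.degree = n} ≃ Fin (n + 1) where
  toFun d := ⟨d.1 0, by
    have := d.2
    simp only [Set.mem_setOf_eq, degree_fin2] at this
    omega⟩
  invFun j := ⟨Finsupp.single 0 (j : ℕ) + Finsupp.single 1 (n - (j : ℕ)), by
    have hj : (j : ℕ) ≤ n := by omega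
    simp only [Set.mem_setOf_eq, degree_fin2, Finsupp.add_apply, Finsupp.single_apply]
    simp
    omega⟩
  left_inv d := by
    have hd := d.2
    simp only [Set.mem_setOf_eq, degree_fin2] at hd
    ext i
    fin_cases i <;> simp <;> omega
  right_inv j := by
    ext
    simp

instance homFinDim (n : ℕ) : FiniteDimensional K (homogeneousSubmodule (Fin 2) K n) := by
  have e1 : (homogeneousSubmodule (Fin 2) K n) ≃ₗ[K]
      ({d : Fin 2 →₀ ℕ | d.degree = n} →₀ K) :=
    (LinearEquiv.ofEq _ _ (homogeneousSubmodule_eq_finsupp_supported (Fin 2) K n)).trans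
      (AddMonoidAlgebra.supportedEquivFinsupp _)
  haveI : Fintype {d : Fin 2 →₀ ℕ | d.degree = n} := Fintype.ofEquiv _ (degSetEquiv n).symm
  exact Module.Finite.equiv (e1.trans (Finsupp.linearEquivFunOnFinite K K _)).symm

lemma finrankH (n : ℕ) :
    Module.finrank K (homogeneousSubmodule (Fin 2) K n) = n + 1 := by
  have e1 : (homogeneousSubmodule (Fin 2) K n) ≃ₗ[K]
      ({d : Fin 2 →₀ ℕ | d.degree = n} →₀ K) :=
    (LinearEquiv.ofEq _ _ (homogeneousSubmodule_eq_finsupp_supported (Fin 2) K n)).trans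
      (AddMonoidAlgebra.supportedEquivFinsupp _)
  haveI : Fintype {d : Fin 2 →₀ ℕ | d.degree = n} := Fintype.ofEquiv _ (degSetEquiv n).symm
  rw [e1.finrank_eq, (Finsupp.linearEquivFunOnFinite K K _).finrank_eq,
    Module.finrank_fintype_fun_eq_card, Fintype.card_congr (degSetEquiv n), Fintype.card_fin]


/-- Homogeneous component of a product with a homogeneous polynomial. -/
lemma hom_comp_mul {D : MvPolynomial (Fin 2) K} {s : ℕ} (hD : D.IsHomogeneous s)
    (q : MvPolynomial (Fin 2) K) (n : ℕ) :
    homogeneousComponent n (D * q) =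
      if s ≤ n then D * homogeneousComponent (n - s) q else 0 := by
  conv_lhs => rw [← sum_homogeneousComponent q]
  rw [Finset.mul_sum, map_sum]
  have hterm : ∀ i, homogeneousComponent n (D * homogeneousComponent i q) =
      if n = s + i then D * homogeneousComponent i q else 0 := by
    intro i
    exact homogeneousComponent_of_mem (hD.mul (homogeneousComponent_isHomogeneous i q))
  simp only [hterm]
  by_cases hs : s ≤ n
  · have : ∀ i ∈ Finset.range (q.totalDegree + 1),
        (if n = s + i then D * homogeneousComponent i q else 0) =
        (if i = n - s then D * homogeneousComponent i q else 0) := by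
      intro i _
      exact if_congr (by omega) rfl rfl
    rw [Finset.sum_congr rfl this, Finset.sum_ite_eq' (Finset.range (q.totalDegree + 1))]
    by_cases hmem : n - s ∈ Finset.range (q.totalDegree + 1)
    · rw [if_pos hmem, if_pos hs]
    · rw [if_neg hmem, if_pos hs]
      have : q.totalDegree < n - s := by
        simp only [Finset.mem_range] at hmem; omega
      rw [homogeneousComponent_eq_zero _ _ this, mul_zero]
  · rw [if_neg hs]
    apply Finset.sum_eq_zero
    intro i _
    rw [if_neg (by omega)]

lemma dvd_hom_exists {D g : MvPolynomial (Fin 2) K} {s n : ℕ} (hD : D.IsHomogeneous s)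
    (hg : g.IsHomogeneous n) (hdvd : D ∣ g) (hsn : s ≤ n) :
    ∃ q : MvPolynomial (Fin 2) K, q.IsHomogeneous (n - s) ∧ g = D * q := by
  obtain ⟨q, rfl⟩ := hdvd
  refine ⟨homogeneousComponent (n - s) q, homogeneousComponent_isHomogeneous _ _, ?_⟩
  have h1 : homogeneousComponent n (D * q) = D * q := by
    rw [homogeneousComponent_of_mem hg, if_pos rfl]
  rw [← h1, hom_comp_mul hD q n, if_pos hsn]

lemma dvd_hom_zero {D g : MvPolynomial (Fin 2) K} {s n : ℕ} (hD : D.IsHomogeneous s)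
    (hg : g.IsHomogeneous n) (hdvd : D ∣ g) (hsn : n < s) : g = 0 := by
  obtain ⟨q, rfl⟩ := hdvd
  have h1 : homogeneousComponent n (D * q) = D * q := by
    rw [homogeneousComponent_of_mem hg, if_pos rfl]
  rw [← h1, hom_comp_mul hD q n, if_neg (by omega)]

lemma X0_prime : Prime (X 0 : MvPolynomial (Fin 2) K) := by
  rw [← MulEquiv.prime_iff (MvPolynomial.finSuccEquiv K 1).toRingEquiv.toMulEquiv]
  show Prime ((MvPolynomial.finSuccEquiv K 1) (X 0))
  rw [MvPolynomial.finSuccEquiv_X_zero]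
  exact Polynomial.prime_X

lemma X0_not_dvd_X1 : ¬ (X 0 : MvPolynomial (Fin 2) K) ∣ X 1 := by
  intro ⟨w, hw⟩
  have := congrArg (eval (fun i : Fin 2 => if i = 0 then 0 else 1)) hw
  simp at this

lemma relPrime_X0_X1 : IsRelPrime (X 0 : MvPolynomial (Fin 2) K) (X 1) := by
  intro q hq0 hq1
  obtain ⟨u, hu⟩ := hq0
  rcases (X0_prime.irreducible.isUnit_or_isUnit hu) with h | h
  · exact h
  · exfalso
    obtain ⟨v, hv⟩ := h.exists_right_inv
    have hXq : (X 0 : MvPolynomial (Fin 2) K) ∣ q :=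
      ⟨v, by rw [← mul_one q, ← hv, ← mul_assoc, ← hu]⟩
    exact X0_not_dvd_X1 (K := K) (hXq.trans hq1)


/-- Key coprimality lemma via the Nullstellensatz. -/
lemma dvd_of_dvd_mul_cop [IsAlgClosed K] {D E x : MvPolynomial (Fin 2) K}
    (hcop : ∀ p : Fin 2 → K, p ≠ 0 → eval p D = 0 → eval p E ≠ 0)
    (hdvd : D ∣ E * x) : D ∣ x := by
  classical
  set I : Ideal (MvPolynomial (Fin 2) K) := Ideal.span {D, E} with hI
  have hDI : D ∈ I := Ideal.subset_span (by simp)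
  have hEI : E ∈ I := Ideal.subset_span (by simp)
  have hzl : ∀ i : Fin 2, (X i : MvPolynomial (Fin 2) K) ∈ vanishingIdeal K (zeroLocus K I) := by
    intro i p hp
    have hD : eval p D = 0 := hp D hDI
    have hE : eval p E = 0 := hp E hEI
    have hp0 : p = 0 := by
      by_contra hne
      exact hcop p hne hD hE
    simp [hp0]
  have hrad : ∀ i : Fin 2, ∃ N : ℕ, (X i : MvPolynomial (Fin 2) K) ^ N ∈ I := by
    intro i
    have := hzl i
    rw [vanishingIdeal_zeroLocus_eq_radical] at this
    exact this
  obtain ⟨N0, hN0⟩ := hrad 0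
  obtain ⟨N1, hN1⟩ := hrad 1
  have key : ∀ (L : MvPolynomial (Fin 2) K), L ∈ I → D ∣ x * L := by
    intro L hL
    rw [hI, Ideal.mem_span_pair] at hL
    obtain ⟨α, β, hαβ⟩ := hL
    have : x * L = (α * x) * D + β * (E * x) := by rw [← hαβ]; ring
    rw [this]
    exact dvd_add (Dvd.intro_left _ rfl) (hdvd.mul_left β)
  have h0 : D ∣ x * X 0 ^ N0 := key _ hN0
  have h1 : D ∣ x * X 1 ^ N1 := key _ hN1
  letI : GCDMonoid (MvPolynomial (Fin 2) K) :=
    UniqueFactorizationMonoid.toGCDMonoid (MvPolynomial (Fin 2) K)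
  have hg : D ∣ gcd (x * X 0 ^ N0) (x * X 1 ^ N1) := dvd_gcd h0 h1
  have hassoc := gcd_mul_left' x ((X 0 : MvPolynomial (Fin 2) K) ^ N0) (X 1 ^ N1)
  have hgd : D ∣ x * gcd ((X 0 : MvPolynomial (Fin 2) K) ^ N0) (X 1 ^ N1) :=
    hg.trans hassoc.dvd
  have hunit : IsUnit (gcd ((X 0 : MvPolynomial (Fin 2) K) ^ N0) (X 1 ^ N1)) :=
    gcd_isUnit_iff_isRelPrime.mpr (relPrime_X0_X1.pow)
  rwa [IsUnit.dvd_mul_right hunit] at hgd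


/-- The composite `Hd n → R → R/(D)`. -/
def resMap (D : MvPolynomial (Fin 2) K) (n : ℕ) :
    (homogeneousSubmodule (Fin 2) K n) →ₗ[K]
      (MvPolynomial (Fin 2) K ⧸ Submodule.restrictScalars K (Ideal.span {D})) :=
  (Submodule.restrictScalars K (Ideal.span {D})).mkQ.comp
    (homogeneousSubmodule (Fin 2) K n).subtype

lemma mem_ker_resMap_iff {D : MvPolynomial (Fin 2) K} {n : ℕ}
    (x : homogeneousSubmodule (Fin 2) K n) :
    x ∈ LinearMap.ker (resMap D n) ↔ D ∣ (x : MvPolynomial (Fin 2) K) := by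
  simp only [resMap, LinearMap.mem_ker, LinearMap.comp_apply, Submodule.subtype_apply,
    Submodule.mkQ_apply, Submodule.Quotient.mk_eq_zero, Submodule.restrictScalars_mem,
    Ideal.mem_span_singleton]

lemma finrank_ker_resMap {D : MvPolynomial (Fin 2) K} {s : ℕ} (hD0 : D ≠ 0)
    (hDs : D.IsHomogeneous s) (n : ℕ) (hs : s ≤ n + 1) :
    Module.finrank K (LinearMap.ker (resMap D n)) = n + 1 - s := by
  by_cases hsn : s ≤ n
  · -- ker ≅ Hd (n - s) via multiplication by D
    have hmul : ∀ q : homogeneousSubmodule (Fin 2) K (n - s),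
        (D * (q : MvPolynomial (Fin 2) K)).IsHomogeneous n := by
      intro q
      have h2 := hDs.mul q.2
      have h3 : s + (n - s) = n := by omega
      rwa [h3] at h2
    let Φ : (homogeneousSubmodule (Fin 2) K (n - s)) →ₗ[K] LinearMap.ker (resMap D n) :=
      { toFun := fun q => ⟨⟨D * q, hmul q⟩, by
          rw [mem_ker_resMap_iff]; exact Dvd.intro _ rfl⟩
        map_add' := fun q r => by
          apply Subtype.ext; apply Subtype.ext; simp [mul_add]
        map_smul' := fun c q => by
          apply Subtype.ext; apply Subtype.ext; simp [mul_smul_comm] }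
    have hbij : Function.Bijective Φ := by
      constructor
      · intro q r hqr
        have h4 : D * (q : MvPolynomial (Fin 2) K) = D * r :=
          congrArg (fun z => ((z : LinearMap.ker (resMap D n)) :
            homogeneousSubmodule (Fin 2) K n).1) hqr
        exact Subtype.ext (mul_left_cancel₀ hD0 h4)
      · rintro ⟨⟨g, hgmem⟩, hgker⟩
        rw [mem_ker_resMap_iff] at hgker
        obtain ⟨q, hq, hgq⟩ := dvd_hom_exists hDs hgmem hgker hsn
        exact ⟨⟨q, hq⟩, Subtype.ext (Subtype.ext hgq.symm)⟩
    rw [← (LinearEquiv.ofBijective Φ hbij).finrank_eq, finrankH]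
    omega
  · have hker : LinearMap.ker (resMap D n) = ⊥ := by
      rw [eq_bot_iff]
      intro x hx
      have hdv := (mem_ker_resMap_iff x).mp hx
      have hx0 : (x : MvPolynomial (Fin 2) K) = 0 := dvd_hom_zero hDs x.2 hdv (by omega)
      rw [Submodule.mem_bot]
      exact Subtype.ext (by rw [hx0]; rfl)
    rw [hker, finrank_bot]
    omega

lemma finrank_range_resMap {D : MvPolynomial (Fin 2) K} {s : ℕ} (hD0 : D ≠ 0)
    (hDs : D.IsHomogeneous s) (n : ℕ) (hs : s ≤ n + 1) :
    Module.finrank K (LinearMap.range (resMap D n)) = s := by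
  have h := LinearMap.finrank_range_add_finrank_ker (resMap D n)
  rw [finrank_ker_resMap hD0 hDs n hs, finrankH] at h
  omega

/-- Solving `E * x ≡ c mod D` with `x` homogeneous of prescribed degree. -/
lemma solve_mod [IsAlgClosed K] {D E c : MvPolynomial (Fin 2) K} {s m d' : ℕ}
    (hD0 : D ≠ 0) (hDs : D.IsHomogeneous s) (hE : E.IsHomogeneous m)
    (hcop : ∀ p : Fin 2 → K, p ≠ 0 → eval p D = 0 → eval p E ≠ 0)
    (hc : c.IsHomogeneous (d' + m)) (hs : s ≤ d' + 1) :
    ∃ x : MvPolynomial (Fin 2) K, x.IsHomogeneous d' ∧ D ∣ E * x - c := by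
  classical
  set N := Submodule.restrictScalars K (Ideal.span {D}) with hN
  let μ : (homogeneousSubmodule (Fin 2) K d') →ₗ[K] (MvPolynomial (Fin 2) K ⧸ N) :=
    N.mkQ.comp ((LinearMap.mulLeft K E).comp (homogeneousSubmodule (Fin 2) K d').subtype)
  have hkerμ : LinearMap.ker μ = LinearMap.ker (resMap D d') := by
    ext x
    rw [LinearMap.mem_ker, mem_ker_resMap_iff]
    have hμx : μ x = N.mkQ (E * (x : MvPolynomial (Fin 2) K)) := rfl
    rw [hμx, Submodule.mkQ_apply, Submodule.Quotient.mk_eq_zero]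
    show E * (x : MvPolynomial (Fin 2) K) ∈ Ideal.span {D} ↔ _
    rw [Ideal.mem_span_singleton]
    constructor
    · exact fun hd => dvd_of_dvd_mul_cop hcop hd
    · exact fun hd => hd.mul_left E
  have hrangeμ : Module.finrank K (LinearMap.range μ) = s := by
    have h := LinearMap.finrank_range_add_finrank_ker μ
    rw [hkerμ, finrank_ker_resMap hD0 hDs d' hs, finrankH] at h
    omega
  have hle : LinearMap.range μ ≤ LinearMap.range (resMap D (d' + m)) := by
    rintro _ ⟨x, rfl⟩
    exact ⟨⟨E * (x : MvPolynomial (Fin 2) K), by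
      have := hE.mul x.2
      rwa [add_comm] at this⟩, rfl⟩
  have heq : LinearMap.range μ = LinearMap.range (resMap D (d' + m)) := by
    apply Submodule.eq_of_le_of_finrank_le hle
    rw [hrangeμ, finrank_range_resMap hD0 hDs (d' + m) (by omega)]
  have hc' : N.mkQ c ∈ LinearMap.range (resMap D (d' + m)) := ⟨⟨c, hc⟩, rfl⟩
  rw [← heq] at hc'
  obtain ⟨x, hx⟩ := hc'
  refine ⟨(x : MvPolynomial (Fin 2) K), x.2, ?_⟩
  have : N.mkQ (E * (x : MvPolynomial (Fin 2) K) - c) = 0 := by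
    rw [map_sub, ← hx]
    simp [μ]
  rw [Submodule.mkQ_apply, Submodule.Quotient.mk_eq_zero] at this
  rw [← Ideal.mem_span_singleton]
  exact this


lemma mem_Vsub_iff {m k : ℕ} {a : ℤ} {f : Fin (k + 1) → MvPolynomial (Fin 2) K} :
    f ∈ Vsub K m k a ↔ ∀ i : Fin (k + 1),
      (f i).IsHomogeneous ((((i : ℕ) : ℤ) * (m : ℤ) + a).toNat) ∧
      ((((i : ℕ) : ℤ) * (m : ℤ) + a) < 0 → f i = 0) := by
  simp only [Vsub, Submodule.mem_iInf, Submodule.mem_comap, LinearMap.proj_apply,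
    Submodule.mem_inf, mem_homogeneousSubmodule]
  apply forall_congr'
  intro i
  by_cases hc : ((((i : ℕ) : ℤ)) * (m : ℤ) + a) < 0
  · rw [if_pos hc]
    simp only [Submodule.mem_bot]
    constructor
    · rintro ⟨h1, h2⟩; exact ⟨h1, fun _ => h2⟩
    · rintro ⟨h1, h2⟩; exact ⟨h1, h2 hc⟩
  · rw [if_neg hc]
    simp only [Submodule.mem_top, and_true]
    constructor
    · intro h1; exact ⟨h1, fun hlt => absurd hlt hc⟩
    · rintro ⟨h1, _⟩; exact h1

lemma isUnit_of_hom_zero {D : MvPolynomial (Fin 2) K} (hD0 : D ≠ 0)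
    (hDs : D.IsHomogeneous 0) : IsUnit D := by
  have hC : D = C (coeff 0 D) := by
    ext d
    rcases eq_or_ne d 0 with rfl | hd
    · simp
    · rw [hDs.coeff_eq_zero (by rwa [Ne, Finsupp.degree_eq_zero_iff]), coeff_C, if_neg (by
        exact fun hmm => hd hmm.symm)]
  have hcoeff : coeff 0 D ≠ 0 := fun hc => hD0 (by rw [hC, hc, map_zero])
  rw [hC]
  exact (isUnit_iff_ne_zero.mpr hcoeff).map (C : K →+* MvPolynomial (Fin 2) K)

lemma cast_mul_le {i k m : ℕ} (hik : i ≤ k) : ((i : ℤ)) * m ≤ ((k : ℤ)) * m := by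
  exact_mod_cast Nat.mul_le_mul_right m hik

lemma toNat_add_sub_mul {i k m : ℕ} {a : ℤ} (hik : i ≤ k) (him : 0 ≤ (i : ℤ) * m + a)
    (hkm : 0 ≤ (k : ℤ) * m + a) :
    ((i : ℤ) * m + a).toNat + (k - i) * m = ((k : ℤ) * m + a).toNat := by
  have h2 : (((k - i) * m : ℕ) : ℤ) = (k : ℤ) * m - (i : ℤ) * m := by
    rw [Nat.cast_mul, Nat.cast_sub hik]; ring
  omega

lemma gRes_hom {m k : ℕ} {a : ℤ} {h : MvPolynomial (Fin 2) K}
    (hh : h.IsHomogeneous m) {f : Fin (k + 1) → MvPolynomial (Fin 2) K}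
    (hf : f ∈ Vsub K m k a) (hkm : 0 ≤ (k : ℤ) * m + a) :
    (gRes K k h f).IsHomogeneous (((k : ℤ) * m + a).toNat) := by
  rw [gRes]
  apply IsHomogeneous.sum
  intro i _
  rcases mem_Vsub_iff.mp hf i with ⟨hhom, hzero⟩
  by_cases hi : ((i : ℕ) : ℤ) * m + a < 0
  · rw [hzero hi, zero_mul]; exact isHomogeneous_zero _ _ _
  · have hik : (i : ℕ) ≤ k := Nat.lt_succ_iff.mp i.isLt
    have hpow := hh.pow (k - (i : ℕ))
    have hmul := hhom.mul hpow
    have h2 : ((m * (k - (i : ℕ)) : ℕ) : ℤ)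
        = (k : ℤ) * m - ((i : ℕ) : ℤ) * m := by
      rw [Nat.cast_mul, Nat.cast_sub hik]; ring
    have heq : ((((i : ℕ) : ℤ)) * m + a).toNat + m * (k - (i : ℕ))
        = ((k : ℤ) * m + a).toNat := by omega
    rwa [heq] at hmul

/-- The main surjectivity lemma, by induction on the number of sections. -/
lemma surj_main [IsAlgClosed K] (m : ℕ) (a : ℤ) :
    ∀ (k : ℕ) (h : Fin (k + 1) → MvPolynomial (Fin 2) K),
      (∀ i, (h i).IsHomogeneous m) →
      (∀ i j, i ≠ j → h i ≠ h j) →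
      ∀ (s : Fin (k + 1) → ℕ),
        (∀ i, (s i : ℤ) ≤ max (((i : ℕ) : ℤ) * (m : ℤ) + a + 1) 0) →
      ∀ (D : Fin (k + 1) → MvPolynomial (Fin 2) K),
        (∀ i, D i ≠ 0) → (∀ i, (D i).IsHomogeneous (s i)) →
        (∀ i j, i ≠ j → ∀ p : Fin 2 → K, p ≠ 0 →
          eval p (D i) = 0 → eval p (h i - h j) ≠ 0) →
      ∀ (r : Fin (k + 1) → MvPolynomial (Fin 2) K),
        (∀ i, (r i).IsHomogeneous (((k : ℤ) * m + a).toNat)) →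
      ∃ f ∈ Vsub K m k a, ∀ i, D i ∣ gRes K k (h i) f - r i := by
  intro k
  induction k with
  | zero =>
    intro h hdeg hdist s hbound D hD0 hDdeg hcop r hr
    by_cases ha : a < 0
    · refine ⟨0, Submodule.zero_mem _, fun i => ?_⟩
      have hi0 : i = 0 := Fin.ext (by omega)
      subst hi0
      have hb := hbound 0
      have hs0 : s 0 = 0 := by
        simp only [Fin.val_zero, Nat.cast_zero, zero_mul, zero_add] at hb
        omega
      have hD' := hDdeg 0
      rw [hs0] at hD'
      exact (isUnit_of_hom_zero (hD0 0) hD').dvd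
    · refine ⟨fun _ => r 0, ?_, fun i => ?_⟩
      · rw [mem_Vsub_iff]
        intro i
        have hi0 : i = 0 := Fin.ext (by omega)
        subst hi0
        constructor
        · have := hr 0
          simpa using this
        · intro habs
          simp only [Fin.val_zero, Nat.cast_zero, zero_mul, zero_add] at habs
          omega
      · have hi0 : i = 0 := Fin.ext (by omega)
        subst hi0
        have : gRes K 0 (h 0) (fun _ => r 0) = r 0 := by
          rw [gRes, Fin.sum_univ_one]
          simp
        rw [this, sub_self]
        exact dvd_zero _
  | succ k IH =>
    intro h hdeg hdist s hbound D hD0 hDdeg hcop r hr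
    by_cases hneg : (((k + 1 : ℕ) : ℤ)) * m + a < 0
    · -- all conditions trivial
      refine ⟨0, Submodule.zero_mem _, fun i => ?_⟩
      have hsi : s i = 0 := by
        have hb := hbound i
        have hle : ((i : ℕ) : ℤ) * m ≤ ((k + 1 : ℕ) : ℤ) * m :=
          cast_mul_le (Nat.lt_succ_iff.mp i.isLt)
        omega
      have hD' := hDdeg i
      rw [hsi] at hD'
      exact (isUnit_of_hom_zero (hD0 i) hD').dvd
    · push_neg at hneg
      set H := h (Fin.last (k + 1)) with hH
      have hkk1 : ((k + 1 : ℕ) : ℤ) * m = (k : ℤ) * m + m := by push_cast; ring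
      -- find targets for the subproblem
      have hsolve : ∀ j : Fin (k + 1), ∃ x : MvPolynomial (Fin 2) K,
          x.IsHomogeneous (((k : ℤ) * m + a).toNat) ∧
          D j.castSucc ∣ (h j.castSucc - H) * x
            - (r j.castSucc - r (Fin.last (k + 1))) := by
        intro j
        have hjk : (j : ℕ) ≤ k := Nat.lt_succ_iff.mp j.isLt
        have hjle : ((j : ℕ) : ℤ) * m ≤ ((k : ℕ) : ℤ) * m := cast_mul_le hjk
        have hbj := hbound j.castSucc
        rw [Fin.coe_castSucc] at hbj
        by_cases hneg2 : (k : ℤ) * m + a < 0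
        · refine ⟨0, isHomogeneous_zero _ _ _, ?_⟩
          have hsj : s j.castSucc = 0 := by omega
          have hD' := hDdeg j.castSucc
          rw [hsj] at hD'
          exact (isUnit_of_hom_zero (hD0 _) hD').dvd
        · push_neg at hneg2
          have hcsub : (r j.castSucc - r (Fin.last (k + 1))).IsHomogeneous
              (((k : ℤ) * m + a).toNat + m) := by
            have := (hr j.castSucc).sub (hr (Fin.last (k + 1)))
            have heq : (((k + 1 : ℕ) : ℤ) * m + a).toNat = ((k : ℤ) * m + a).toNat + m := by
              omega
            rwa [heq] at this
          have hsle : s j.castSucc ≤ ((k : ℤ) * m + a).toNat + 1 := by omega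
          exact solve_mod (hD0 j.castSucc) (hDdeg j.castSucc)
            ((hdeg j.castSucc).sub (hdeg (Fin.last (k + 1))))
            (fun p hp hDp => hcop j.castSucc (Fin.last (k + 1))
              (Fin.castSucc_lt_last j).ne p hp hDp)
            hcsub hsle
      choose r' hr'hom hr'dvd using hsolve
      -- apply the induction hypothesis
      obtain ⟨ft, hftmem, hftdvd⟩ :=
        IH (fun j => h j.castSucc) (fun j => hdeg _)
          (fun i j hij => hdist _ _ (fun hc => hij (Fin.castSucc_injective _ hc)))
          (fun j => s j.castSucc)
          (fun j => by have := hbound j.castSucc; rwa [Fin.coe_castSucc] at this)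
          (fun j => D j.castSucc) (fun j => hD0 _) (fun j => hDdeg _)
          (fun i j hij p hp hDp =>
            hcop i.castSucc j.castSucc
              (fun hc => hij (Fin.castSucc_injective _ hc)) p hp hDp)
          r' hr'hom
      -- build the solution
      set pad : Fin (k + 2) → MvPolynomial (Fin 2) K := Fin.snoc ft 0 with hpad
      set shf : Fin (k + 2) → MvPolynomial (Fin 2) K :=
        fun i => H * ((Fin.cons (0 : MvPolynomial (Fin 2) K) ft : Fin (k + 2) → MvPolynomial (Fin 2) K) i) with hshf
      set top : Fin (k + 2) → MvPolynomial (Fin 2) K :=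
        fun i => if i = Fin.last (k + 1) then r (Fin.last (k + 1)) else 0 with htop
      set f : Fin (k + 2) → MvPolynomial (Fin 2) K :=
        fun i => pad i - shf i + top i with hf
      have hpadmem : pad ∈ Vsub K m (k + 1) a := by
        rw [mem_Vsub_iff]
        intro i
        refine Fin.lastCases ?_ (fun j => ?_) i
        · rw [hpad]
          simp only [Fin.snoc_last]
          exact ⟨isHomogeneous_zero _ _ _, fun _ => by trivial⟩
        · rw [hpad]
          simp only [Fin.snoc_castSucc]
          have := mem_Vsub_iff.mp hftmem j
          rwa [Fin.coe_castSucc]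
      have hshfmem : shf ∈ Vsub K m (k + 1) a := by
        rw [mem_Vsub_iff]
        intro i
        induction i using Fin.cases with
        | zero =>
          rw [hshf]
          simp only [Fin.cons_zero, mul_zero]
          exact ⟨isHomogeneous_zero _ _ _, fun _ => by trivial⟩
        | succ j =>
          rw [hshf]
          simp only [Fin.cons_succ]
          rcases mem_Vsub_iff.mp hftmem j with ⟨hjhom, hjzero⟩
          have hsucc : ((Fin.succ j : Fin (k + 2)) : ℕ) = (j : ℕ) + 1 := Fin.val_succ j
          rw [hsucc]
          have hcast : (((j : ℕ) + 1 : ℕ) : ℤ) * m = ((j : ℕ) : ℤ) * m + m := by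
            push_cast; ring
          by_cases hjneg : ((j : ℕ) : ℤ) * m + a < 0
          · rw [hjzero hjneg, mul_zero]
            exact ⟨isHomogeneous_zero _ _ _, fun _ => by trivial⟩
          · constructor
            · have := (hdeg (Fin.last (k + 1))).mul hjhom
              have heq : m + (((j : ℕ) : ℤ) * m + a).toNat
                  = ((((j : ℕ) + 1 : ℕ) : ℤ) * m + a).toNat := by omega
              rwa [heq] at this
            · intro habs
              omega
      have htopmem : top ∈ Vsub K m (k + 1) a := by
        rw [mem_Vsub_iff]
        intro i
        rcases eq_or_ne i (Fin.last (k + 1)) with rfl | hi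
        · rw [htop]
          simp only [if_pos rfl]
          have hlast : ((Fin.last (k + 1) : Fin (k + 2)) : ℕ) = k + 1 := Fin.val_last _
          rw [hlast]
          exact ⟨hr _, fun habs => absurd habs (by omega)⟩
        · rw [htop]
          simp only [if_neg hi]
          exact ⟨isHomogeneous_zero _ _ _, fun _ => by trivial⟩
      have hfmem : f ∈ Vsub K m (k + 1) a := by
        rw [hf]
        exact Submodule.add_mem _ (Submodule.sub_mem _ hpadmem hshfmem) htopmem
      -- the key formula for gRes
      have hgres : ∀ hp : MvPolynomial (Fin 2) K,
          gRes K (k + 1) hp f = (hp - H) * gRes K k hp ft + r (Fin.last (k + 1)) := by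
        intro hp
        have hsplit : gRes K (k + 1) hp f =
            (∑ i : Fin (k + 2), pad i * hp ^ (k + 1 - (i : ℕ)))
            - (∑ i : Fin (k + 2), shf i * hp ^ (k + 1 - (i : ℕ)))
            + (∑ i : Fin (k + 2), top i * hp ^ (k + 1 - (i : ℕ))) := by
          rw [gRes, ← Finset.sum_sub_distrib, ← Finset.sum_add_distrib]
          apply Finset.sum_congr rfl
          intro i _
          rw [hf]
          ring
        have hS1 : (∑ i : Fin (k + 2), pad i * hp ^ (k + 1 - (i : ℕ)))
            = hp * gRes K k hp ft := by
          rw [Fin.sum_univ_castSucc]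
          rw [hpad]
          simp only [Fin.snoc_castSucc, Fin.snoc_last, Fin.val_last, Nat.sub_self,
            pow_zero, zero_mul, add_zero]
          rw [gRes, Finset.mul_sum]
          apply Finset.sum_congr rfl
          intro j _
          have hjk : (j : ℕ) ≤ k := Nat.lt_succ_iff.mp j.isLt
          rw [Fin.coe_castSucc]
          have he : k + 1 - (j : ℕ) = (k - (j : ℕ)) + 1 := by omega
          rw [he, pow_succ]
          ring
        have hS2 : (∑ i : Fin (k + 2), shf i * hp ^ (k + 1 - (i : ℕ)))
            = H * gRes K k hp ft := by
          rw [Fin.sum_univ_succ]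
          rw [hshf]
          simp only [Fin.cons_zero, mul_zero, zero_mul, zero_add, Fin.cons_succ,
            Fin.val_succ]
          rw [gRes, Finset.mul_sum]
          apply Finset.sum_congr rfl
          intro j _
          have he : k + 1 - ((j : ℕ) + 1) = k - (j : ℕ) := by omega
          rw [he]
          ring
        have hS3 : (∑ i : Fin (k + 2), top i * hp ^ (k + 1 - (i : ℕ)))
            = r (Fin.last (k + 1)) := by
          rw [Finset.sum_eq_single (Fin.last (k + 1))]
          · simp [htop]
          · intro b _ hb
            rw [htop]
            simp only [if_neg hb, zero_mul]
          · intro habs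
            exact absurd (Finset.mem_univ _) habs
        rw [hsplit, hS1, hS2, hS3]
        ring
      refine ⟨f, hfmem, fun i => ?_⟩
      refine Fin.lastCases ?_ (fun j => ?_) i
      · rw [hgres H, hH, sub_self, zero_mul, zero_add, sub_self]
        exact dvd_zero _
      · rw [hgres (h j.castSucc)]
        have d1 : D j.castSucc ∣ (h j.castSucc - H) * (gRes K k (h j.castSucc) ft - r' j) :=
          (hftdvd j).mul_left _
        have d2 := hr'dvd j
        have heq : (h j.castSucc - H) * gRes K k (h j.castSucc) ft
              + r (Fin.last (k + 1)) - r j.castSucc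
            = (h j.castSucc - H) * (gRes K k (h j.castSucc) ft - r' j)
              + ((h j.castSucc - H) * r' j
                - (r j.castSucc - r (Fin.last (k + 1)))) := by ring
        rw [heq]
        exact dvd_add d1 d2


-- real content of p7
lemma gResL_apply {k : ℕ} (h : MvPolynomial (Fin 2) K)
    (f : Fin (k + 1) → MvPolynomial (Fin 2) K) :
    gResL K k h f = gRes K k h f := by
  rw [gResL, gRes, LinearMap.sum_apply]
  exact Finset.sum_congr rfl fun i _ => mul_comm _ _

/-- A submodule `pi` over all indices is linearly equivalent to the product of the pieces. -/
def piEquivSub {ι : Type} {M : ι → Type} [∀ i, AddCommGroup (M i)]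
    [∀ i, Module K (M i)] (p : ∀ i, Submodule K (M i)) :
    (Submodule.pi Set.univ p) ≃ₗ[K] ((i : ι) → p i) where
  toFun x i := ⟨x.1 i, (Submodule.mem_pi.mp x.2) i (Set.mem_univ i)⟩
  map_add' x y := rfl
  map_smul' c x := rfl
  invFun y := ⟨fun i => y i, Submodule.mem_pi.mpr fun i _ => (y i).2⟩
  left_inv x := rfl
  right_inv y := rfl

instance VsubFinDim {m k : ℕ} {a : ℤ} : FiniteDimensional K (Vsub K m k a) := by
  set p : Fin (k + 1) → Submodule K (MvPolynomial (Fin 2) K) := fun i =>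
    homogeneousSubmodule (Fin 2) K (((i : ℕ) : ℤ) * (m : ℤ) + a).toNat ⊓
      (if (((i : ℕ) : ℤ) * (m : ℤ) + a) < 0 then ⊥ else ⊤) with hp
  haveI : ∀ i, FiniteDimensional K (p i) := fun i =>
    Submodule.finiteDimensional_of_le inf_le_left
  let e : (Vsub K m k a) →ₗ[K] ((i : Fin (k + 1)) → p i) :=
    LinearMap.pi fun i =>
      LinearMap.codRestrict (p i) ((LinearMap.proj i).comp (Vsub K m k a).subtype)
        (fun x => by
          have hx2 : x.1 ∈ ⨅ i : Fin (k + 1),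
              ((homogeneousSubmodule (Fin 2) K (((i : ℕ) : ℤ) * (m : ℤ) + a).toNat ⊓
                (if (((i : ℕ) : ℤ) * (m : ℤ) + a) < 0 then
                  (⊥ : Submodule K (MvPolynomial (Fin 2) K)) else ⊤)).comap
              (LinearMap.proj i)) := x.2
          exact (Submodule.mem_iInf _).mp hx2 i)
  have he : Function.Injective e := by
    intro x y hxy
    apply Subtype.ext
    funext i
    have := congrFun hxy i
    exact congrArg Subtype.val this
  exact FiniteDimensional.of_injective e he


end AuxiliaryLemmas

open MvPolynomial in
/-- effective divisors D_i of degree s_i on k+1 distinct sections of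
F_m → P^1, disjoint from the other sections, impose independent conditions on |O(k,a)|. -/
theorem statement2 (K : Type) [Field K] [IsAlgClosed K] [CharZero K]
    (m k : ℕ) (a : ℤ)
    (h : Fin (k + 1) → MvPolynomial (Fin 2) K)
    (hdeg : ∀ i, (h i).IsHomogeneous m)
    (hdist : ∀ i j, i ≠ j → h i ≠ h j)
    (s : Fin (k + 1) → ℕ)
    (hmono : ∀ i j : Fin (k + 1), i ≤ j → s i ≤ s j)
    (hbound : ∀ i : Fin (k + 1), (s i : ℤ) ≤ max (((i : ℕ) : ℤ) * (m : ℤ) + a + 1) 0)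
    (D : Fin (k + 1) → MvPolynomial (Fin 2) K)
    (hD0 : ∀ i, D i ≠ 0)
    (hDdeg : ∀ i, (D i).IsHomogeneous (s i))
    (hcop : ∀ i j, i ≠ j → ∀ p : Fin 2 → K, p ≠ 0 →
      eval p (D i) = 0 → eval p (h i - h j) ≠ 0) :
    Module.finrank K
        ↥(Vsub K m k a ⊓
          ⨅ i : Fin (k + 1),
            (Submodule.restrictScalars K (Ideal.span {D i})).comap (gResL K k (h i)))
      + ∑ i : Fin (k + 1), s i
    = Module.finrank K ↥(Vsub K m k a) := by
  classical
  by_cases hda : (k : ℤ) * m + a < 0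
  · -- all conditions are trivially satisfied
    have hsi : ∀ i, s i = 0 := by
      intro i
      have hb := hbound i
      have hle : ((i : ℕ) : ℤ) * m ≤ ((k : ℕ) : ℤ) * m :=
        cast_mul_le (Nat.lt_succ_iff.mp i.isLt)
      omega
    have hinf : (⨅ i : Fin (k + 1),
        (Submodule.restrictScalars K (Ideal.span {D i})).comap (gResL K k (h i))) = ⊤ := by
      rw [eq_top_iff]
      intro x _
      rw [Submodule.mem_iInf]
      intro i
      rw [Submodule.mem_comap, Submodule.restrictScalars_mem, Ideal.mem_span_singleton]
      have hD' := hDdeg i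
      rw [hsi i] at hD'
      exact (isUnit_of_hom_zero (hD0 i) hD').dvd
    rw [hinf, inf_top_eq, Finset.sum_eq_zero fun i _ => hsi i, add_zero]
  · push_neg at hda
    set dd : ℕ := ((k : ℤ) * m + a).toNat with hdd
    set Ψ : (Vsub K m k a) →ₗ[K]
        ((i : Fin (k + 1)) → MvPolynomial (Fin 2) K ⧸
          Submodule.restrictScalars K (Ideal.span {D i})) :=
      LinearMap.pi (fun i => (Submodule.restrictScalars K (Ideal.span {D i})).mkQ.comp
        ((gResL K k (h i)).comp (Vsub K m k a).subtype)) with hΨ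
    have hker : LinearMap.ker Ψ = Submodule.comap (Vsub K m k a).subtype
        (⨅ i : Fin (k + 1),
          (Submodule.restrictScalars K (Ideal.span {D i})).comap (gResL K k (h i))) := by
      ext x
      rw [LinearMap.mem_ker, Submodule.mem_comap, Submodule.mem_iInf]
      constructor
      · intro hx i
        rw [Submodule.mem_comap]
        have := congrFun hx i
        rw [hΨ] at this
        simp only [LinearMap.pi_apply, LinearMap.comp_apply, Submodule.mkQ_apply,
          Pi.zero_apply, Submodule.Quotient.mk_eq_zero] at this
        exact this
      · intro hx
        funext i
        have := hx i
        rw [Submodule.mem_comap] at this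
        rw [hΨ]
        simp only [LinearMap.pi_apply, LinearMap.comp_apply, Submodule.mkQ_apply,
          Pi.zero_apply, Submodule.Quotient.mk_eq_zero]
        exact this
    have hWfin : Module.finrank K
        ↥(Vsub K m k a ⊓ ⨅ i : Fin (k + 1),
          (Submodule.restrictScalars K (Ideal.span {D i})).comap (gResL K k (h i)))
        = Module.finrank K (LinearMap.ker Ψ) := by
      rw [hker, ← Submodule.map_comap_subtype, Submodule.finrank_map_subtype_eq]
    have hrange : LinearMap.range Ψ
        = Submodule.pi Set.univ (fun i => LinearMap.range (resMap (D i) dd)) := by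
      apply le_antisymm
      · rintro _ ⟨x, rfl⟩
        rw [Submodule.mem_pi]
        intro i _
        refine ⟨⟨gRes K k (h i) (x : Fin (k + 1) → MvPolynomial (Fin 2) K),
          gRes_hom (hdeg i) x.2 hda⟩, ?_⟩
        rw [hΨ]
        simp only [resMap, LinearMap.pi_apply, LinearMap.comp_apply, Submodule.mkQ_apply,
          Submodule.subtype_apply]
        rw [gResL_apply]
      · intro y hy
        rw [Submodule.mem_pi] at hy
        choose rr hrr using fun i => hy i (Set.mem_univ i)
        obtain ⟨f, hfmem, hfdvd⟩ := surj_main m a k h hdeg hdist s hbound D hD0 hDdeg hcop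
          (fun i => (rr i : MvPolynomial (Fin 2) K)) (fun i => (rr i).2)
        refine ⟨⟨f, hfmem⟩, ?_⟩
        funext i
        rw [hΨ]
        simp only [LinearMap.pi_apply, LinearMap.comp_apply, Submodule.mkQ_apply,
          Submodule.subtype_apply]
        rw [← hrr i]
        simp only [resMap, LinearMap.comp_apply, Submodule.mkQ_apply, Submodule.subtype_apply]
        rw [gResL_apply]
        rw [Submodule.Quotient.eq, Submodule.restrictScalars_mem, Ideal.mem_span_singleton]
        exact hfdvd i
    have hrfin : Module.finrank K (LinearMap.range Ψ) = ∑ i : Fin (k + 1), s i := by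
      rw [hrange]
      rw [(piEquivSub (fun i => LinearMap.range (resMap (D i) dd))).finrank_eq]
      rw [Module.finrank_pi_fintype]
      apply Finset.sum_congr rfl
      intro i _
      apply finrank_range_resMap (hD0 i) (hDdeg i)
      have hb := hbound i
      have hle : ((i : ℕ) : ℤ) * m ≤ ((k : ℕ) : ℤ) * m :=
        cast_mul_le (Nat.lt_succ_iff.mp i.isLt)
      omega
    have hrn := LinearMap.finrank_range_add_finrank_ker Ψ
    rw [hWfin, ← hrn, hrfin]
    ring
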